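/- Let f : X → X be a totally transitive homeomorphism of a metric space X and let μ be a Borel probability measure on X that is inner-distal with respect to f. If X is μ-Baire, then μ(Int Per(f)) = 0, where Per(f) is the set of periodic points of f. -/

import Mathlib

open Metric Set MeasureTheory Filter Topology

/-- The proximal cell of `x` with respect to the iterates `f ^ n`, `n : ℤ`. -/
noncomputable def proximalCell {X : Type*} [MetricSpace X] (f : Equiv.Perm X) (x : X) : Set X :=
  {y | (⨅ n : ℤ, dist ((f ^ n) x) ((f ^ n) y)) = 0}

/-- A set is μ-nowhere-dense if the interior of its closure is μ-null. -/
def MuNowhereDense {X : Type*} [MetricSpace X] [MeasurableSpace X]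
    (μ : Measure X) (F : Set X) : Prop :=
  μ (interior (closure F)) = 0

/-- A set is μ-meagre if it is a countable union of μ-nowhere-dense sets. -/
def MuMeagre {X : Type*} [MetricSpace X] [MeasurableSpace X]
    (μ : Measure X) (A : Set X) : Prop :=
  ∃ F : ℕ → Set X, (∀ n, MuNowhereDense μ (F n)) ∧ A = ⋃ n, F n

/-- X is μ-Baire if the interior of every μ-meagre set is μ-null. -/
def MuBaire {X : Type*} [MetricSpace X] [MeasurableSpace X] (μ : Measure X) : Prop :=
  ∀ A : Set X, MuMeagre μ A → μ (interior A) = 0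

section aux

variable {X : Type*} [MetricSpace X]

lemma cont_perm_pow (f : X ≃ₜ X) (n : ℕ) : Continuous fun p => (f.toEquiv ^ n) p := by
  induction n with
  | zero => simpa using continuous_id'
  | succ k ih =>
      have : (fun p => (f.toEquiv ^ (k + 1)) p) = (fun p => (f.toEquiv ^ k) p) ∘ f := by
        ext p; simp [pow_succ, Equiv.Perm.mul_apply]
      rw [this]; exact ih.comp f.continuous

lemma fix_interior_null {X : Type*} [MetricSpace X] [MeasurableSpace X]
    (f : X ≃ₜ X) (μ : Measure X) [IsProbabilityMeasure μ]
    (hμ : ∀ x : X, μ (interior (proximalCell f.toEquiv x)) = 0)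
    (htt : ∀ n : ℕ, 0 < n →
      ∃ x : X, Dense (Set.range fun m : ℤ => ((f.toEquiv ^ n) ^ m) x))
    (n : ℕ) (hn : 0 < n) :
    μ (interior {p : X | (f.toEquiv ^ n) p = p}) = 0 := by
  by_contra hne
  set g : Equiv.Perm X := f.toEquiv ^ n with hg
  set U : Set X := interior {p : X | g p = p} with hU
  have hUne : U.Nonempty := by
    rcases Set.eq_empty_or_nonempty U with h | h
    · exact (hne (by rw [show μ U = μ (∅ : Set X) from by rw [h]]; simp)).elim
    · exact h
  obtain ⟨x, hx⟩ := htt n hn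
  obtain ⟨y, hy, hyU⟩ := hx.exists_mem_open isOpen_interior hUne
  obtain ⟨m, rfl⟩ := hy
  have hyfix : g ((g ^ m) x) = (g ^ m) x := by
    have : (g ^ m) x ∈ {p : X | g p = p} := interior_subset hyU
    exact this
  have hgx : g x = x := by
    apply (g ^ m).injective
    calc (g ^ m) (g x) = (g ^ (m + 1)) x := by
          rw [zpow_add_one, Equiv.Perm.mul_apply]
      _ = (g ^ (1 + m)) x := by rw [add_comm]
      _ = g ((g ^ m) x) := by rw [zpow_one_add, Equiv.Perm.mul_apply]
      _ = (g ^ m) x := hyfix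
  have hall : ∀ k : ℤ, (g ^ k) x = x := fun k =>
    (Function.IsFixedPt.perm_zpow hgx k)
  have huniv : ∀ z : X, z = x := by
    intro z
    have hr : Set.range (fun m : ℤ => (g ^ m) x) = {x} := by
      apply Set.eq_singleton_iff_nonempty_unique_mem.mpr
      exact ⟨⟨x, 0, by simp⟩, by rintro _ ⟨k, rfl⟩; exact hall k⟩
    have := hx.closure_eq
    rw [hr] at this
    have : z ∈ closure ({x} : Set X) := this ▸ Set.mem_univ z
    simpa using this
  have hP : proximalCell f.toEquiv x = Set.univ := by
    ext z
    simp only [proximalCell, Set.mem_setOf_eq, Set.mem_univ, iff_true]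
    rw [huniv z]
    simp [ciInf_const]
  have := hμ x
  rw [hP, interior_univ] at this
  simp at this

end aux

theorem stmt19 {X : Type*} [MetricSpace X] [MeasurableSpace X] [BorelSpace X]
    (f : X ≃ₜ X) (μ : Measure X) [IsProbabilityMeasure μ]
    (hμ : ∀ x : X, μ (interior (proximalCell f.toEquiv x)) = 0)
    (htt : ∀ n : ℕ, 0 < n →
      ∃ x : X, Dense (Set.range fun m : ℤ => ((f.toEquiv ^ n) ^ m) x))
    (hBaire : MuBaire μ) :
    μ (interior {p : X | ∃ n : ℕ, 0 < n ∧ (f.toEquiv ^ n) p = p}) = 0 := by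
  apply hBaire
  refine ⟨fun k => {p : X | (f.toEquiv ^ (k + 1)) p = p}, fun k => ?_, ?_⟩
  · have hcl : IsClosed {p : X | (f.toEquiv ^ (k + 1)) p = p} :=
      isClosed_eq (cont_perm_pow f (k + 1)) continuous_id
    rw [MuNowhereDense, hcl.closure_eq]
    exact fix_interior_null f μ hμ htt (k + 1) k.succ_pos
  · ext p
    simp only [Set.mem_setOf_eq, Set.mem_iUnion]
    constructor
    · rintro ⟨n, hn, hp⟩
      exact ⟨n - 1, by rwa [Nat.sub_add_cancel hn]⟩
    · rintro ⟨k, hk⟩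
      exact ⟨k + 1, k.succ_pos, hk⟩
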